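/- If d ≥ 3, then the expected arrival time of the terminal complete record is finite; more precisely, E(T) = ∑_{k=1}^{∞} k^{-(d-1)} · ∏_{m = k+1}^{∞} (1 − m^{-d}) ≤ ∑_{k=1}^{∞} k^{-(d-1)} < ∞. -/

import Mathlib

open MeasureTheory ProbabilityTheory Filter Topology

noncomputable section


namespace RecordAux

open Set
open scoped ENNReal NNReal

lemma key_integral (ν : Measure ℝ) [IsProbabilityMeasure ν] (hat : ∀ a : ℝ, ν {a} = 0)
    {U : Set ℝ} (hU : MeasurableSet U) (hUl : IsLowerSet U) (n : ℕ) :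
    ∫⁻ a, U.indicator (fun a => ν (Iio a) ^ n) a ∂ν
      = ν U ^ (n + 1) * ((n : ℝ≥0∞) + 1)⁻¹ := by
  classical
  set F : ℝ → ℝ≥0∞ := fun a => ν (Iio a) with hF
  set I : ℝ≥0∞ := ∫⁻ a, U.indicator (fun a => F a ^ n) a ∂ν with hI
  set π : Measure (Fin (n + 1) → ℝ) := Measure.pi (fun _ => ν) with hπ
  set π' : Measure (Fin n → ℝ) := Measure.pi (fun _ => ν) with hπ'
  set M : Fin (n + 1) → Set (Fin (n + 1) → ℝ) :=
    fun k => {y | y k ∈ U ∧ ∀ i, i ≠ k → y i < y k} with hM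
  have hMmeas : ∀ k, MeasurableSet (M k) := by
    intro k
    have : M k = ((fun y : Fin (n+1) → ℝ => y k) ⁻¹' U) ∩
        ⋂ i, {y : Fin (n+1) → ℝ | i ≠ k → y i < y k} := by
      ext y; simp [hM, Set.mem_iInter]
    rw [this]
    refine ((measurable_pi_apply k) hU).inter (MeasurableSet.iInter fun i => ?_)
    by_cases hik : i = k
    · simp [hik]
    · have : {y : Fin (n+1) → ℝ | i ≠ k → y i < y k} = {y | y i < y k} := by
        ext y; simp [hik]
      rw [this]
      exact measurableSet_lt (measurable_pi_apply i) (measurable_pi_apply k)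
  -- each M k has measure I
  have hMk : ∀ k, π (M k) = I := by
    intro k
    have mp := measurePreserving_piFinSuccAbove (fun _ : Fin (n + 1) => ν) k
    set s : Set (ℝ × (Fin n → ℝ)) := {p | p.1 ∈ U ∧ ∀ j, p.2 j < p.1} with hs
    have hsmeas : MeasurableSet s := by
      have : s = (Prod.fst ⁻¹' U) ∩ ⋂ j, {p : ℝ × (Fin n → ℝ) | p.2 j < p.1} := by
        ext p; simp [hs, Set.mem_iInter]
      rw [this]
      exact (measurable_fst hU).inter (MeasurableSet.iInter fun j =>
        measurableSet_lt (by fun_prop) (by fun_prop))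
    have hpre : M k = (MeasurableEquiv.piFinSuccAbove (fun _ : Fin (n+1) => ℝ) k) ⁻¹' s := by
      ext y
      show (y k ∈ U ∧ ∀ i, i ≠ k → y i < y k) ↔ (y k ∈ U ∧ ∀ j, y (k.succAbove j) < y k)
      constructor
      · rintro ⟨h1, h2⟩
        exact ⟨h1, fun j => h2 _ (Fin.succAbove_ne k j)⟩
      · rintro ⟨h1, h2⟩
        refine ⟨h1, fun i hik => ?_⟩
        obtain ⟨j, rfl⟩ := Fin.exists_succAbove_eq hik
        exact h2 j
    have hslice : ∀ a : ℝ, π' (Prod.mk a ⁻¹' s) = U.indicator (fun a => F a ^ n) a := by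
      intro a
      by_cases ha : a ∈ U
      · have : Prod.mk a ⁻¹' s = Set.pi Set.univ (fun _ : Fin n => Iio a) := by
          ext z; simp [hs, ha, Set.mem_univ_pi]
        rw [this, Set.indicator_of_mem ha, hπ', Measure.pi_pi]
        simp [hF]
      · have : Prod.mk a ⁻¹' s = ∅ := by
          ext z; simp [hs, ha]
        rw [this, Set.indicator_of_notMem ha]
        simp
    calc π (M k) = (ν.prod π') s := by
          rw [hpre, hπ]
          exact (measurePreserving_piFinSuccAbove (fun _ : Fin (n + 1) => ν) k).measure_preimage
            hsmeas.nullMeasurableSet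
      _ = ∫⁻ a, π' (Prod.mk a ⁻¹' s) ∂ν := Measure.prod_apply hsmeas
      _ = I := by rw [hI]; exact lintegral_congr fun a => hslice a
  -- diagonal sets are null
  have hnull : ∀ i k : Fin (n + 1), i ≠ k → π {y | y i = y k} = 0 := by
    intro i k hik
    obtain ⟨j₀, hj₀⟩ := Fin.exists_succAbove_eq hik
    set s : Set (ℝ × (Fin n → ℝ)) := {p | p.2 j₀ = p.1} with hs
    have hsmeas : MeasurableSet s :=
      measurableSet_eq_fun (by fun_prop) (by fun_prop)
    have hpre : {y : Fin (n+1) → ℝ | y i = y k}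
        = (MeasurableEquiv.piFinSuccAbove (fun _ : Fin (n+1) => ℝ) k) ⁻¹' s := by
      ext y
      show y i = y k ↔ y (k.succAbove j₀) = y k
      rw [hj₀]
    have : π {y : Fin (n+1) → ℝ | y i = y k} = (ν.prod π') s := by
      rw [hpre, hπ]
      exact (measurePreserving_piFinSuccAbove (fun _ : Fin (n + 1) => ν) k).measure_preimage
        hsmeas.nullMeasurableSet
    rw [this, Measure.prod_apply hsmeas]
    have hzero : ∀ a : ℝ, π' (Prod.mk a ⁻¹' s) = 0 := by
      intro a
      have : Prod.mk a ⁻¹' s = Set.pi Set.univ (fun l => if l = j₀ then ({a} : Set ℝ) else univ) := by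
        ext z
        simp only [hs, Set.mem_preimage, Set.mem_setOf_eq, Set.mem_univ_pi]
        constructor
        · intro h l; by_cases hl : l = j₀ <;> simp [hl, h]
        · intro h; have := h j₀; simpa using this
      rw [this, hπ', Measure.pi_pi]
      have : ∀ l : Fin n, ν (if l = j₀ then ({a} : Set ℝ) else univ)
          = if l = j₀ then ν {a} else 1 := by
        intro l; by_cases hl : l = j₀ <;> simp [hl]
      rw [Finset.prod_congr rfl fun l _ => this l, Finset.prod_ite_eq']
      simp [hat a]
    simp [lintegral_congr hzero]
  -- disjointness
  have hdisj : Pairwise (Function.onFun Disjoint M) := by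
    intro k k' hkk'
    rw [Function.onFun, Set.disjoint_left]
    rintro y ⟨-, h2⟩ ⟨-, h2'⟩
    exact lt_asymm (h2 k' (Ne.symm hkk')) (h2' k hkk')
  set C : Set (Fin (n+1) → ℝ) := {y | ∀ i, y i ∈ U} with hC
  have hsub : (⋃ k, M k) ⊆ C := by
    rintro y ⟨-, ⟨k, rfl⟩, ⟨hk1, hk2⟩⟩
    intro i
    by_cases hik : i = k
    · rwa [hik]
    · exact hUl (le_of_lt (hk2 i hik)) hk1
  set D : Set (Fin (n+1) → ℝ) := ⋃ (i) (k) (_ : i ≠ k), {y | y i = y k} with hD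
  have hCsub : C ⊆ (⋃ k, M k) ∪ D := by
    intro y hy
    obtain ⟨k, hk⟩ := Finite.exists_max y
    by_cases hmem : ∀ i, i ≠ k → y i < y k
    · exact Or.inl (Set.mem_iUnion.2 ⟨k, hy k, hmem⟩)
    · push_neg at hmem
      obtain ⟨i, hik, hge⟩ := hmem
      refine Or.inr ?_
      refine Set.mem_iUnion.2 ⟨i, Set.mem_iUnion.2 ⟨k, Set.mem_iUnion.2 ⟨hik, ?_⟩⟩⟩
      exact le_antisymm (hk i) hge
  have hDnull : π D = 0 := by
    refine measure_iUnion_null fun i => measure_iUnion_null fun k => measure_iUnion_null fun hik =>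
      hnull i k hik
  have hCval : π C = ν U ^ (n + 1) := by
    have : C = Set.pi Set.univ (fun _ : Fin (n+1) => U) := by
      ext y; simp [hC, Set.mem_univ_pi]
    rw [this, hπ, Measure.pi_pi]
    simp
  have hUval : π (⋃ k, M k) = ((n : ℝ≥0∞) + 1) * I := by
    rw [measure_iUnion hdisj hMmeas]
    simp only [hMk, tsum_fintype, Finset.sum_const, Finset.card_univ, Fintype.card_fin,
      nsmul_eq_mul]
    push_cast
    ring
  have hmain : ((n : ℝ≥0∞) + 1) * I = ν U ^ (n + 1) := by
    refine le_antisymm ?_ ?_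
    · rw [← hUval]; exact hCval ▸ measure_mono hsub
    · rw [← hCval]
      calc π C ≤ π ((⋃ k, M k) ∪ D) := measure_mono hCsub
        _ ≤ π (⋃ k, M k) + π D := measure_union_le _ _
        _ = ((n : ℝ≥0∞) + 1) * I := by rw [hDnull, hUval, add_zero]
  have hne0 : ((n : ℝ≥0∞) + 1) ≠ 0 := (zero_lt_one.trans_le le_add_self).ne'
  have hnetop : ((n : ℝ≥0∞) + 1) ≠ ⊤ := by
    simp [ENNReal.add_ne_top]
  calc I = (((n : ℝ≥0∞) + 1)⁻¹ * ((n : ℝ≥0∞) + 1)) * I := by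
        rw [ENNReal.inv_mul_cancel hne0 hnetop, one_mul]
    _ = ((n : ℝ≥0∞) + 1)⁻¹ * (((n : ℝ≥0∞) + 1) * I) := by ring
    _ = ν U ^ (n + 1) * ((n : ℝ≥0∞) + 1)⁻¹ := by rw [hmain]; ring


lemma bset_measurable (n : ℕ) (S : Finset ℕ) {U : Set ℝ} (hU : MeasurableSet U) :
    MeasurableSet {y : Fin n → ℝ |
      (∀ i k : Fin n, (k : ℕ) ∈ S → (i : ℕ) < (k : ℕ) → y i < y k) ∧ ∀ i, y i ∈ U} := by
  classical
  have : {y : Fin n → ℝ |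
      (∀ i k : Fin n, (k : ℕ) ∈ S → (i : ℕ) < (k : ℕ) → y i < y k) ∧ ∀ i, y i ∈ U}
      = (⋂ (i : Fin n) (k : Fin n), {y : Fin n → ℝ | (k : ℕ) ∈ S → (i : ℕ) < (k : ℕ) → y i < y k})
        ∩ ⋂ i : Fin n, (fun y : Fin n → ℝ => y i) ⁻¹' U := by
    ext y; simp [Set.mem_iInter]
  rw [this]
  refine MeasurableSet.inter (MeasurableSet.iInter fun i => MeasurableSet.iInter fun k => ?_)
    (MeasurableSet.iInter fun i => (measurable_pi_apply i) hU)
  by_cases h : (k : ℕ) ∈ S ∧ (i : ℕ) < (k : ℕ)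
  · have : {y : Fin n → ℝ | (k : ℕ) ∈ S → (i : ℕ) < (k : ℕ) → y i < y k} = {y | y i < y k} := by
      ext y; simp [h.1, h.2]
    rw [this]
    exact measurableSet_lt (measurable_pi_apply i) (measurable_pi_apply k)
  · have : {y : Fin n → ℝ | (k : ℕ) ∈ S → (i : ℕ) < (k : ℕ) → y i < y k} = univ := by
      ext y
      simp only [Set.mem_setOf_eq, Set.mem_univ, iff_true]
      intro h1 h2; exact absurd ⟨h1, h2⟩ h
    rw [this]; exact MeasurableSet.univ

lemma core (ν : Measure ℝ) [IsProbabilityMeasure ν] (hat : ∀ a : ℝ, ν {a} = 0) :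
    ∀ (n : ℕ) (S : Finset ℕ), (∀ k ∈ S, k < n) →
    ∀ (U : Set ℝ), MeasurableSet U → IsLowerSet U →
    (Measure.pi fun _ : Fin n => ν)
        {y | (∀ i k : Fin n, (k : ℕ) ∈ S → (i : ℕ) < (k : ℕ) → y i < y k) ∧ ∀ i, y i ∈ U}
      = ν U ^ n * ∏ k ∈ S, (((k : ℝ≥0∞)) + 1)⁻¹ := by
  classical
  intro n
  induction n with
  | zero =>
    intro S hS U hU hUl
    have hSe : S = ∅ := Finset.eq_empty_of_forall_notMem fun k hk => Nat.not_lt_zero _ (hS k hk)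
    subst hSe
    have : {y : Fin 0 → ℝ |
        (∀ i k : Fin 0, (k : ℕ) ∈ (∅ : Finset ℕ) → (i : ℕ) < (k : ℕ) → y i < y k) ∧ ∀ i, y i ∈ U}
        = univ := by
      ext y
      simp only [Set.mem_setOf_eq, Set.mem_univ, iff_true]
      exact ⟨fun i => i.elim0, fun i => i.elim0⟩
    rw [this]
    simp
  | succ n IH =>
    intro S hS U hU hUl
    set L : Fin (n + 1) := Fin.last n with hL
    have hsA : ∀ j : Fin n, ((L.succAbove j : Fin (n+1)) : ℕ) = (j : ℕ) := by
      intro j; rw [hL, Fin.succAbove_last]; simp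
    have hsur : ∀ (i : Fin (n + 1)) (h : (i : ℕ) < n), L.succAbove ⟨(i : ℕ), h⟩ = i := by
      intro i h; apply Fin.ext; rw [hsA]
    have mp := measurePreserving_piFinSuccAbove (fun _ : Fin (n + 1) => ν) L
    by_cases hnS : n ∈ S
    · -- top index is constrained
      have hS' : ∀ k ∈ S.erase n, k < n := fun k hk =>
        lt_of_le_of_ne (Nat.lt_succ_iff.mp (hS k (Finset.mem_of_mem_erase hk)))
          (Finset.ne_of_mem_erase hk)
      set s : Set (ℝ × (Fin n → ℝ)) := {p | p.1 ∈ U ∧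
          ((∀ i k : Fin n, (k : ℕ) ∈ S.erase n → (i : ℕ) < (k : ℕ) → p.2 i < p.2 k) ∧
            ∀ j, p.2 j ∈ U ∩ Iio p.1)} with hs
      have hsmeas : MeasurableSet s := by
        have : s = (Prod.fst ⁻¹' U)
            ∩ ((⋂ (i : Fin n) (k : Fin n),
                {p : ℝ × (Fin n → ℝ) | (k : ℕ) ∈ S.erase n → (i : ℕ) < (k : ℕ) → p.2 i < p.2 k})
              ∩ ⋂ j : Fin n, {p : ℝ × (Fin n → ℝ) | p.2 j ∈ U ∧ p.2 j < p.1}) := by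
          ext p; simp [hs, Set.mem_iInter, and_assoc]
        rw [this]
        refine (measurable_fst hU).inter (MeasurableSet.inter
          (MeasurableSet.iInter fun i => MeasurableSet.iInter fun k => ?_)
          (MeasurableSet.iInter fun j => MeasurableSet.inter ?_ ?_))
        · by_cases h : (k : ℕ) ∈ S.erase n ∧ (i : ℕ) < (k : ℕ)
          · have : {p : ℝ × (Fin n → ℝ) | (k : ℕ) ∈ S.erase n → (i : ℕ) < (k : ℕ) → p.2 i < p.2 k}
                = {p | p.2 i < p.2 k} := by ext p; simp [h.1, h.2]
            rw [this]
            exact measurableSet_lt (show Measurable fun p : ℝ × (Fin n → ℝ) => p.2 i by fun_prop)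
              (show Measurable fun p : ℝ × (Fin n → ℝ) => p.2 k by fun_prop)
          · have : {p : ℝ × (Fin n → ℝ) | (k : ℕ) ∈ S.erase n → (i : ℕ) < (k : ℕ) → p.2 i < p.2 k}
                = univ := by
              ext p
              simp only [Set.mem_setOf_eq, Set.mem_univ, iff_true]
              intro h1 h2; exact absurd ⟨h1, h2⟩ h
            rw [this]; exact MeasurableSet.univ
        · exact (by fun_prop : Measurable fun p : ℝ × (Fin n → ℝ) => p.2 j) hU
        · exact measurableSet_lt (show Measurable fun p : ℝ × (Fin n → ℝ) => p.2 j by fun_prop)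
            (show Measurable fun p : ℝ × (Fin n → ℝ) => p.1 by fun_prop)
      have hpre : {y : Fin (n+1) → ℝ |
          (∀ i k : Fin (n+1), (k : ℕ) ∈ S → (i : ℕ) < (k : ℕ) → y i < y k) ∧ ∀ i, y i ∈ U}
          = (MeasurableEquiv.piFinSuccAbove (fun _ : Fin (n+1) => ℝ) L) ⁻¹' s := by
        ext y
        show ((∀ i k : Fin (n+1), (k : ℕ) ∈ S → (i : ℕ) < (k : ℕ) → y i < y k) ∧ ∀ i, y i ∈ U)
          ↔ (y L ∈ U ∧
            ((∀ i k : Fin n, (k : ℕ) ∈ S.erase n → (i : ℕ) < (k : ℕ)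
              → y (L.succAbove i) < y (L.succAbove k)) ∧
              ∀ j, y (L.succAbove j) ∈ U ∩ Iio (y L)))
        constructor
        · rintro ⟨hB, hcube⟩
          refine ⟨hcube L, fun i k hk hik => ?_, fun j => ?_⟩
          · refine hB _ _ ?_ ?_
            · rw [hsA]; exact Finset.mem_of_mem_erase hk
            · rw [hsA, hsA]; exact hik
          · refine ⟨hcube _, hB (L.succAbove j) L ?_ ?_⟩
            · rw [hL, Fin.val_last]; exact hnS
            · rw [hsA, hL, Fin.val_last]; exact j.isLt
        · rintro ⟨hU1, hB'', hcube'⟩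
          constructor
          · intro i k hkS hik
            by_cases hk : (k : ℕ) = n
            · have hkL : k = L := by apply Fin.ext; rw [hk, hL, Fin.val_last]
              have hi : (i : ℕ) < n := by omega
              have := (hcube' ⟨(i : ℕ), hi⟩).2
              rw [hsur i hi] at this
              rw [hkL]; exact this
            · have hkn : (k : ℕ) < n := by have := k.isLt; omega
              have hi : (i : ℕ) < n := lt_trans hik hkn
              have := hB'' ⟨(i : ℕ), hi⟩ ⟨(k : ℕ), hkn⟩
                (Finset.mem_erase.mpr ⟨hk, hkS⟩) hik
              rwa [hsur i hi, hsur k hkn] at this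
          · intro i
            by_cases hi : (i : ℕ) = n
            · have : i = L := by apply Fin.ext; rw [hi, hL, Fin.val_last]
              rwa [this]
            · have hi' : (i : ℕ) < n := by have := i.isLt; omega
              have := (hcube' ⟨(i : ℕ), hi'⟩).1
              rwa [hsur i hi'] at this
      calc (Measure.pi fun _ : Fin (n+1) => ν) {y : Fin (n+1) → ℝ |
              (∀ i k : Fin (n+1), (k : ℕ) ∈ S → (i : ℕ) < (k : ℕ) → y i < y k) ∧ ∀ i, y i ∈ U}
          = (ν.prod (Measure.pi fun _ : Fin n => ν)) s := by
            rw [hpre]; exact mp.measure_preimage hsmeas.nullMeasurableSet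
        _ = ∫⁻ a, (Measure.pi fun _ : Fin n => ν) (Prod.mk a ⁻¹' s) ∂ν :=
            Measure.prod_apply hsmeas
        _ = ∫⁻ a, U.indicator (fun a => ν (Iio a) ^ n) a
              * ∏ k ∈ S.erase n, (((k : ℝ≥0∞)) + 1)⁻¹ ∂ν := by
            refine lintegral_congr fun a => ?_
            by_cases ha : a ∈ U
            · have hUa : U ∩ Iio a = Iio a :=
                Set.inter_eq_right.mpr fun b hb => hUl (le_of_lt hb) ha
              have hset : Prod.mk a ⁻¹' s = {z : Fin n → ℝ |
                  (∀ i k : Fin n, (k : ℕ) ∈ S.erase n → (i : ℕ) < (k : ℕ) → z i < z k)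
                    ∧ ∀ j, z j ∈ U ∩ Iio a} := by
                ext z; simp [hs, ha]
              rw [hset, IH (S.erase n) hS' (U ∩ Iio a) (hU.inter measurableSet_Iio)
                (hUl.inter (isLowerSet_Iio a)), hUa, Set.indicator_of_mem ha]
            · have hset : Prod.mk a ⁻¹' s = ∅ := by
                ext z; simp [hs, ha]
              rw [hset, Set.indicator_of_notMem ha]
              simp
        _ = (∫⁻ a, U.indicator (fun a => ν (Iio a) ^ n) a ∂ν)
              * ∏ k ∈ S.erase n, (((k : ℝ≥0∞)) + 1)⁻¹ := by
            refine lintegral_mul_const _ (Measurable.indicator ?_ hU)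
            have hmono : Monotone fun a : ℝ => ν (Iio a) :=
              fun _ _ h => measure_mono (Iio_subset_Iio h)
            exact hmono.measurable.pow_const n
        _ = ν U ^ (n + 1) * ((n : ℝ≥0∞) + 1)⁻¹ * ∏ k ∈ S.erase n, (((k : ℝ≥0∞)) + 1)⁻¹ := by
            rw [key_integral ν hat hU hUl n]
        _ = ν U ^ (n + 1) * ∏ k ∈ S, (((k : ℝ≥0∞)) + 1)⁻¹ := by
            rw [mul_assoc]
            congr 1
            exact Finset.mul_prod_erase S (fun k => (((k : ℝ≥0∞)) + 1)⁻¹) hnS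
    · -- top index unconstrained
      have hSn : ∀ k ∈ S, k < n := by
        intro k hk
        have := hS k hk
        rcases Nat.lt_succ_iff_lt_or_eq.mp this with h | h
        · exact h
        · exact absurd (h ▸ hk) hnS
      set s : Set (ℝ × (Fin n → ℝ)) := U ×ˢ {z : Fin n → ℝ |
          (∀ i k : Fin n, (k : ℕ) ∈ S → (i : ℕ) < (k : ℕ) → z i < z k) ∧ ∀ j, z j ∈ U} with hs
      have hsmeas : MeasurableSet s := hU.prod (bset_measurable n S hU)
      have hpre : {y : Fin (n+1) → ℝ |
          (∀ i k : Fin (n+1), (k : ℕ) ∈ S → (i : ℕ) < (k : ℕ) → y i < y k) ∧ ∀ i, y i ∈ U}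
          = (MeasurableEquiv.piFinSuccAbove (fun _ : Fin (n+1) => ℝ) L) ⁻¹' s := by
        ext y
        show ((∀ i k : Fin (n+1), (k : ℕ) ∈ S → (i : ℕ) < (k : ℕ) → y i < y k) ∧ ∀ i, y i ∈ U)
          ↔ (y L ∈ U ∧
            ((∀ i k : Fin n, (k : ℕ) ∈ S → (i : ℕ) < (k : ℕ)
              → y (L.succAbove i) < y (L.succAbove k)) ∧ ∀ j, y (L.succAbove j) ∈ U))
        constructor
        · rintro ⟨hB, hcube⟩
          refine ⟨hcube L, fun i k hk hik => ?_, fun j => hcube _⟩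
          refine hB _ _ ?_ ?_
          · rw [hsA]; exact hk
          · rw [hsA, hsA]; exact hik
        · rintro ⟨hU1, hB'', hcube'⟩
          constructor
          · intro i k hkS hik
            have hkn : (k : ℕ) < n := hSn _ hkS
            have hi : (i : ℕ) < n := lt_trans hik hkn
            have := hB'' ⟨(i : ℕ), hi⟩ ⟨(k : ℕ), hkn⟩ hkS hik
            rwa [hsur i hi, hsur k hkn] at this
          · intro i
            by_cases hi : (i : ℕ) = n
            · have : i = L := by apply Fin.ext; rw [hi, hL, Fin.val_last]
              rwa [this]
            · have hi' : (i : ℕ) < n := by have := i.isLt; omega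
              have := hcube' ⟨(i : ℕ), hi'⟩
              rwa [hsur i hi'] at this
      calc (Measure.pi fun _ : Fin (n+1) => ν) {y : Fin (n+1) → ℝ |
              (∀ i k : Fin (n+1), (k : ℕ) ∈ S → (i : ℕ) < (k : ℕ) → y i < y k) ∧ ∀ i, y i ∈ U}
          = (ν.prod (Measure.pi fun _ : Fin n => ν)) s := by
            rw [hpre]; exact mp.measure_preimage hsmeas.nullMeasurableSet
        _ = ν U * (ν U ^ n * ∏ k ∈ S, (((k : ℝ≥0∞)) + 1)⁻¹) := by
            rw [hs, Measure.prod_prod, IH S hSn U hU hUl]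
        _ = ν U ^ (n + 1) * ∏ k ∈ S, (((k : ℝ≥0∞)) + 1)⁻¹ := by
            rw [pow_succ]; ring


lemma atomless_of_cdf_cont (ν : Measure ℝ) [IsProbabilityMeasure ν]
    (hcont : Continuous fun t : ℝ => (ν (Iic t)).toReal) : ∀ a : ℝ, ν {a} = 0 := by
  intro a
  have hle : ∀ n : ℕ, (ν {a}).toReal
      ≤ (ν (Iic a)).toReal - (ν (Iic (a - 1 / (n + 1)))).toReal := by
    intro n
    have hpos : (0 : ℝ) < 1 / (n + 1) := by positivity
    have hsub : Iic (a - 1 / (n + 1)) ⊆ Iic a := Iic_subset_Iic.mpr (by linarith)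
    have hsing : {a} ⊆ Iic a \ Iic (a - 1 / (n + 1)) := by
      intro x hx
      rcases hx with rfl
      exact ⟨self_mem_Iic, by simp only [Set.mem_Iic, not_le]; linarith⟩
    have hdiff : ν (Iic a \ Iic (a - 1 / (n + 1))) = ν (Iic a) - ν (Iic (a - 1 / (n + 1))) :=
      measure_diff hsub measurableSet_Iic.nullMeasurableSet (measure_ne_top ν _)
    calc (ν {a}).toReal ≤ (ν (Iic a \ Iic (a - 1 / (n + 1)))).toReal :=
          ENNReal.toReal_mono (by rw [hdiff]; exact (tsub_le_self.trans_lt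
            (measure_lt_top ν _)).ne) (measure_mono hsing)
      _ = (ν (Iic a)).toReal - (ν (Iic (a - 1 / (n + 1)))).toReal := by
          rw [hdiff, ENNReal.toReal_sub_of_le (measure_mono hsub) (measure_ne_top ν _)]
  have h1 : Tendsto (fun n : ℕ => a - 1 / ((n : ℝ) + 1)) atTop (𝓝 a) := by
    have := tendsto_one_div_add_atTop_nhds_zero_nat (𝕜 := ℝ)
    have h2 := tendsto_const_nhds (x := a) (f := atTop (α := ℕ)).sub this
    simpa using h2
  have hlim : Tendsto (fun n : ℕ => (ν (Iic a)).toReal - (ν (Iic (a - 1 / (n + 1)))).toReal)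
      atTop (𝓝 0) := by
    have h3 : Tendsto (fun n : ℕ => (ν (Iic (a - 1 / (n + 1)))).toReal) atTop
        (𝓝 ((ν (Iic a)).toReal)) := ((hcont.tendsto a).comp h1)
    have h4 := (tendsto_const_nhds (x := (ν (Iic a)).toReal) (f := atTop (α := ℕ))).sub h3
    simpa using h4
  have hle0 : (ν {a}).toReal ≤ 0 := ge_of_tendsto hlim (Eventually.of_forall hle)
  have h0 : (ν {a}).toReal = 0 := le_antisymm hle0 ENNReal.toReal_nonneg
  rcases (ENNReal.toReal_eq_zero_iff _).mp h0 with h | h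
  · exact h
  · exact absurd h (measure_ne_top ν _)

variable {Ω : Type*} [MeasurableSpace Ω]

lemma map_tuple_eq_pi (P : Measure Ω) [IsProbabilityMeasure P]
    {ι : Type*} [Fintype ι] {β : Type*} [MeasurableSpace β] (f : ι → Ω → β)
    (hf : ∀ i, Measurable (f i))
    (h : iIndepFun f P) :
    P.map (fun ω i => f i ω) = Measure.pi (fun i => P.map (f i)) := by
  haveI : ∀ i, IsProbabilityMeasure (P.map (f i)) :=
    fun i => Measure.isProbabilityMeasure_map (hf i).aemeasurable
  refine (Measure.pi_eq fun s hs => ?_).symm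
  rw [Measure.map_apply (measurable_pi_lambda _ hf) (MeasurableSet.univ_pi hs)]
  have hpre : (fun ω i => f i ω) ⁻¹' (Set.pi univ s) = ⋂ i, f i ⁻¹' s i := by
    ext ω; simp [Set.mem_univ_pi, Set.mem_iInter]
  rw [hpre, h.meas_iInter (fun i => ⟨s i, hs i, rfl⟩)]
  exact Finset.prod_congr rfl fun i _ => (Measure.map_apply (hf i) (hs i)).symm

lemma map_shifted_tuple_eq_pi (P : Measure Ω) [IsProbabilityMeasure P]
    {d : ℕ} (X : ℕ → Ω → Fin d → ℝ) (hmeas : ∀ m, Measurable (X m))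
    (hindep : iIndepFun (fun m : ℕ => X (m + 1)) P)
    (hident : ∀ m : ℕ, P.map (X (m + 1)) = P.map (X 1)) (n : ℕ) :
    P.map (fun ω (i : Fin n) => X ((i : ℕ) + 1) ω)
      = Measure.pi (fun _ : Fin n => P.map (X 1)) := by
  classical
  haveI : IsProbabilityMeasure (P.map (X 1)) := Measure.isProbabilityMeasure_map (hmeas 1).aemeasurable
  refine (Measure.pi_eq fun s hs => ?_).symm
  rw [Measure.map_apply (measurable_pi_lambda _ fun i => hmeas _) (MeasurableSet.univ_pi hs)]
  set C : ℕ → Set (Fin d → ℝ) := fun m => if h : m < n then s ⟨m, h⟩ else univ with hC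
  have hCmeas : ∀ m, MeasurableSet (C m) := by
    intro m
    rw [hC]
    by_cases h : m < n
    · simpa [h] using hs ⟨m, h⟩
    · simp [h]
  have hpre : (fun ω (i : Fin n) => X ((i : ℕ) + 1) ω) ⁻¹' (Set.pi univ s)
      = ⋂ m ∈ Finset.range n, X (m + 1) ⁻¹' C m := by
    ext ω
    simp only [Set.mem_preimage, Set.mem_univ_pi, Set.mem_iInter, Finset.mem_range]
    constructor
    · intro h m hm
      have := h ⟨m, hm⟩
      simpa [hC, hm] using this
    · intro h i
      have := h (i : ℕ) i.isLt
      simpa [hC, i.isLt] using this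
  rw [hpre, hindep.meas_biInter (S := Finset.range n) (fun m _ => ⟨C m, hCmeas m, rfl⟩)]
  rw [← Fin.prod_univ_eq_prod_range (fun m => P (X (m + 1) ⁻¹' C m)) n]
  refine Finset.prod_congr rfl fun i _ => ?_
  have h1 : C (i : ℕ) = s i := by simp [hC, i.isLt]
  rw [h1, ← Measure.map_apply (hmeas _) (hs i), hident (i : ℕ)]

lemma map_swap_pi {d : ℕ} (ν : Fin d → Measure ℝ) [∀ j, IsProbabilityMeasure (ν j)] (n : ℕ) :
    Measure.pi (fun j : Fin d => Measure.pi (fun _ : Fin n => ν j))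
      = (Measure.pi fun _ : Fin n => Measure.pi ν).map
          (fun f (j : Fin d) (i : Fin n) => f i j) := by
  classical
  have hm : Measurable (fun f : Fin n → Fin d → ℝ => fun (j : Fin d) (i : Fin n) => f i j) :=
    measurable_pi_lambda _ fun j => measurable_pi_lambda _ fun i =>
      (measurable_pi_apply j).comp (measurable_pi_apply i)
  refine Measure.pi_eq_generateFrom
    (C := fun _ : Fin d => Set.pi univ '' Set.pi univ fun _ : Fin n => {t : Set ℝ | MeasurableSet t})
    (fun _ => generateFrom_pi) (fun _ => isPiSystem_pi) (fun j => ?_) ?_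
  · refine ⟨fun _ => univ, fun _ => ⟨fun _ => univ, fun _ _ => by simp, ?_⟩,
      fun _ => by simp, iUnion_const univ⟩
    simp
  · intro s hs
    have hD : ∀ j, ∃ D : Fin n → Set ℝ, (∀ i, MeasurableSet (D i)) ∧ Set.pi univ D = s j := by
      intro j
      obtain ⟨D, hD1, hD2⟩ := hs j
      exact ⟨D, fun i => hD1 i (Set.mem_univ i), hD2⟩
    choose D hDmeas hDeq using hD
    have hsmeas : ∀ j, MeasurableSet (s j) := fun j =>
      (hDeq j) ▸ MeasurableSet.univ_pi (hDmeas j)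
    rw [Measure.map_apply hm (MeasurableSet.univ_pi hsmeas)]
    have hpre : (fun f : Fin n → Fin d → ℝ => fun (j : Fin d) (i : Fin n) => f i j) ⁻¹'
        (Set.pi univ s) = Set.pi univ (fun i : Fin n => Set.pi univ (fun j : Fin d => D j i)) := by
      ext f
      simp only [Set.mem_preimage, Set.mem_univ_pi]
      constructor
      · intro h i j
        have := h j
        rw [← hDeq j] at this
        exact this i (Set.mem_univ i)
      · intro h j
        rw [← hDeq j]
        intro i _
        exact h i j
    rw [hpre, Measure.pi_pi]
    have : ∀ i : Fin n, (Measure.pi ν) (Set.pi univ (fun j => D j i)) = ∏ j, ν j (D j i) :=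
      fun i => Measure.pi_pi ν _
    rw [Finset.prod_congr rfl fun i _ => this i, Finset.prod_comm]
    refine Finset.prod_congr rfl fun j _ => ?_
    rw [← hDeq j, Measure.pi_pi]


variable {Ω : Type*} [MeasurableSpace Ω]

def recEvent {d : ℕ} (X : ℕ → Ω → Fin d → ℝ) (k : ℕ) : Set Ω :=
  {ω | ∀ i, i < k → ∀ j, X (i + 1) ω j < X (k + 1) ω j}

lemma recEvent_measurable {d : ℕ} {X : ℕ → Ω → Fin d → ℝ} (hmeas : ∀ m, Measurable (X m))
    (k : ℕ) : MeasurableSet (recEvent X k) := by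
  have : recEvent X k = ⋂ (i : ℕ) (j : Fin d),
      {ω | i < k → X (i + 1) ω j < X (k + 1) ω j} := by
    ext ω
    simp only [recEvent, Set.mem_setOf_eq, Set.mem_iInter]
    exact ⟨fun h i j hi => h i hi j, fun h i hi j => h i j hi⟩
  rw [this]
  refine MeasurableSet.iInter fun i => MeasurableSet.iInter fun j => ?_
  by_cases hi : i < k
  · have : {ω | i < k → X (i + 1) ω j < X (k + 1) ω j}
        = {ω | X (i + 1) ω j < X (k + 1) ω j} := by ext ω; simp [hi]
    rw [this]
    exact measurableSet_lt ((measurable_pi_apply j).comp (hmeas (i + 1)))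
      ((measurable_pi_apply j).comp (hmeas (k + 1)))
  · have : {ω | i < k → X (i + 1) ω j < X (k + 1) ω j} = univ := by ext ω; simp [hi]
    rw [this]; exact MeasurableSet.univ

lemma prob_records (P : Measure Ω) [IsProbabilityMeasure P]
    {d : ℕ} (X : ℕ → Ω → Fin d → ℝ) (hmeas : ∀ m, Measurable (X m))
    (hindep : iIndepFun (fun m : ℕ => X (m + 1)) P)
    (hident : ∀ m : ℕ, P.map (X (m + 1)) = P.map (X 1))
    (hcomplaw : P.map (X 1) = Measure.pi (fun j => P.map (fun ω => X 1 ω j)))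
    (hat : ∀ j : Fin d, ∀ a : ℝ, (P.map (fun ω => X 1 ω j)) {a} = 0)
    (S : Finset ℕ) :
    P (⋂ k ∈ S, recEvent X k) = ∏ k ∈ S, ((((k : ℝ≥0∞)) + 1) ^ d)⁻¹ := by
  classical
  haveI : ∀ j : Fin d, IsProbabilityMeasure (P.map (fun ω => X 1 ω j)) :=
    fun j => Measure.isProbabilityMeasure_map ((measurable_pi_apply j).comp (hmeas 1)).aemeasurable
  set ν : Fin d → Measure ℝ := fun j => P.map (fun ω => X 1 ω j) with hν
  set n : ℕ := S.sup id + 1 with hn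
  have hSn : ∀ k ∈ S, k < n := fun k hk => Nat.lt_succ_of_le (Finset.le_sup (f := id) hk)
  set W : Ω → Fin d → Fin n → ℝ := fun ω j i => X ((i : ℕ) + 1) ω j with hW
  have hWmeas : Measurable W :=
    measurable_pi_lambda _ fun j => measurable_pi_lambda _ fun i =>
      (measurable_pi_apply j).comp (hmeas _)
  have hWlaw : P.map W = Measure.pi (fun j : Fin d => Measure.pi fun _ : Fin n => ν j) := by
    have hVn := map_shifted_tuple_eq_pi P X hmeas hindep hident n
    have hcomp : W = (fun f (j : Fin d) (i : Fin n) => f i j)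
        ∘ (fun ω (i : Fin n) => X ((i : ℕ) + 1) ω) := rfl
    have hsw : Measurable (fun f : Fin n → Fin d → ℝ => fun (j : Fin d) (i : Fin n) => f i j) :=
      measurable_pi_lambda _ fun j => measurable_pi_lambda _ fun i =>
        (measurable_pi_apply j).comp (measurable_pi_apply i)
    rw [hcomp, ← Measure.map_map hsw (measurable_pi_lambda _ fun i => hmeas _), hVn,
      hcomplaw, ← map_swap_pi]
  set B : Set (Fin n → ℝ) := {y : Fin n → ℝ |
      (∀ i k : Fin n, (k : ℕ) ∈ S → (i : ℕ) < (k : ℕ) → y i < y k) ∧ ∀ i, y i ∈ univ} with hB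
  have hBmeas : MeasurableSet B := bset_measurable n S MeasurableSet.univ
  have hpre : ⋂ k ∈ S, recEvent X k = W ⁻¹' (Set.pi univ fun _ : Fin d => B) := by
    ext ω
    simp only [Set.mem_iInter, Set.mem_preimage, Set.mem_univ_pi, recEvent, Set.mem_setOf_eq,
      hB, hW]
    constructor
    · intro h j
      exact ⟨fun i k hk hik => h (k : ℕ) hk (i : ℕ) hik j, fun _ => Set.mem_univ _⟩
    · intro h k hkS i hik j
      exact (h j).1 ⟨i, lt_trans hik (hSn k hkS)⟩ ⟨k, hSn k hkS⟩ hkS hik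
  rw [hpre, ← Measure.map_apply hWmeas (MeasurableSet.univ_pi fun _ => hBmeas), hWlaw,
    Measure.pi_pi]
  have hcore : ∀ j : Fin d, (Measure.pi fun _ : Fin n => ν j) B
      = ∏ k ∈ S, (((k : ℝ≥0∞)) + 1)⁻¹ := by
    intro j
    rw [hB]
    rw [core (ν j) (hat j) n S hSn univ MeasurableSet.univ]
    · simp
    · exact isLowerSet_univ
  rw [Finset.prod_congr rfl fun j _ => hcore j, Finset.prod_const, Finset.card_univ,
    Fintype.card_fin, ← Finset.prod_pow]
  exact Finset.prod_congr rfl fun k _ => (ENNReal.inv_pow).symm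


end RecordAux

/-- `X m` is a complete record: each of its components strictly exceeds the corresponding
component of all previous observations `X i`, `1 ≤ i < m`.  In particular `X 1` is a
complete record by convention (vacuously). -/
def IsCompleteRecord {Ω : Type*} {d : ℕ} (X : ℕ → Ω → Fin d → ℝ) (m : ℕ) (ω : Ω) : Prop :=
  ∀ i, 1 ≤ i → i < m → ∀ j, X i ω j < X m ω j

/-- `T = sup {m ∈ ℕ : X m is a complete record}`, the index of the terminal complete
record (for `d ≥ 2` the set of complete-record indices is a.s. finite, so this is the
index of the last complete record; `sSup` of an infinite set of naturals is junk `0`). -/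
def terminalRecordIndex {Ω : Type*} {d : ℕ} (X : ℕ → Ω → Fin d → ℝ) (ω : Ω) : ℕ :=
  sSup {m : ℕ | 1 ≤ m ∧ IsCompleteRecord X m ω}

open RecordAux
open Set
open scoped ENNReal NNReal
set_option maxHeartbeats 3000000

/-- If `d ≥ 3`, the expected arrival time of the terminal complete record
is finite; more precisely
`E(T) = ∑_{k≥1} k^{-(d-1)} ∏_{m≥k+1} (1 - m⁻ᵈ) ≤ ∑_{k≥1} k^{-(d-1)} < ∞`. -/
theorem expectation_terminal_record_index_finite
    {Ω : Type*} [MeasurableSpace Ω] (P : Measure Ω) [IsProbabilityMeasure P]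
    (d : ℕ) (hd : 3 ≤ d) (X : ℕ → Ω → Fin d → ℝ)
    (hmeas : ∀ m, Measurable (X m))
    (hindep : iIndepFun (fun m : ℕ => X (m + 1)) P)
    (hident : ∀ m : ℕ, P.map (X (m + 1)) = P.map (X 1))
    (hcomp : iIndepFun (fun (j : Fin d) ω => X 1 ω j) P)
    (hcont : ∀ j : Fin d, Continuous fun t : ℝ => (P {ω | X 1 ω j ≤ t}).toReal) :
    ∫⁻ ω, (terminalRecordIndex X ω : ENNReal) ∂P ≠ ⊤ ∧
      (∫⁻ ω, (terminalRecordIndex X ω : ENNReal) ∂P).toReal =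
        ∑' k : ℕ, (1 / ((k + 1 : ℕ) : ℝ) ^ (d - 1)) *
          ∏' m : ℕ, (1 - 1 / ((m + k + 2 : ℕ) : ℝ) ^ d) ∧
      (∫⁻ ω, (terminalRecordIndex X ω : ENNReal) ∂P).toReal ≤
        ∑' k : ℕ, 1 / ((k + 1 : ℕ) : ℝ) ^ (d - 1) := by
  classical
  set A : ℕ → Set Ω := recEvent X with hA
  have hAmeas : ∀ k, MeasurableSet (A k) := fun k => recEvent_measurable hmeas k
  -- laws of the components
  have hcomplaw : P.map (X 1) = Measure.pi (fun j => P.map (fun ω => X 1 ω j)) :=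
    map_tuple_eq_pi P (fun j ω => X 1 ω j)
      (fun j => (measurable_pi_apply j).comp (hmeas 1)) hcomp
  haveI hνprob : ∀ j : Fin d, IsProbabilityMeasure (P.map (fun ω => X 1 ω j)) :=
    fun j => Measure.isProbabilityMeasure_map ((measurable_pi_apply j).comp (hmeas 1)).aemeasurable
  have hat : ∀ j : Fin d, ∀ a : ℝ, (P.map (fun ω => X 1 ω j)) {a} = 0 := by
    intro j
    refine atomless_of_cdf_cont _ ?_
    have heq : (fun t : ℝ => ((P.map (fun ω => X 1 ω j)) (Iic t)).toReal)
        = fun t : ℝ => (P {ω | X 1 ω j ≤ t}).toReal := by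
      funext t
      rw [Measure.map_apply (show Measurable fun ω => X 1 ω j by fun_prop) measurableSet_Iic]
      rfl
    rw [heq]
    exact hcont j
  -- probability of each record event
  set p : ℕ → ℝ≥0∞ := fun k => ((((k : ℝ≥0∞)) + 1) ^ d)⁻¹ with hp
  have hPA : ∀ k, P (A k) = p k := by
    intro k
    have := prob_records P X hmeas hindep hident hcomplaw hat {k}
    simpa using this
  have hPS : ∀ S : Finset ℕ, P (⋂ k ∈ S, A k) = ∏ k ∈ S, P (A k) := by
    intro S
    rw [prob_records P X hmeas hindep hident hcomplaw hat S]
    exact Finset.prod_congr rfl fun k _ => (hPA k).symm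
  have hiid : iIndepSet A P := (iIndepSet_iff_meas_biInter hAmeas).mpr hPS
  -- the events T = k+1
  set G : ℕ → Set Ω := fun k => A k ∩ ⋂ (m : ℕ) (_ : k < m), (A m)ᶜ with hG
  have hGmeas : ∀ k, MeasurableSet (G k) := fun k =>
    (hAmeas k).inter (MeasurableSet.iInter fun m => MeasurableSet.iInter fun _ =>
      (hAmeas m).compl)
  set Q : ℕ → ℝ≥0∞ := fun k => P (⋂ (m : ℕ) (_ : k < m), (A m)ᶜ) with hQ
  -- independence: P (G k) = p k * Q k
  have hPG : ∀ k, P (G k) = p k * Q k := by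
    intro k
    have hind := hiid.indep_generateFrom_of_disjoint hAmeas {k} {m | k < m}
      (by simp [Set.disjoint_left])
    have h1 : MeasurableSet[MeasurableSpace.generateFrom {t | ∃ n ∈ ({k} : Set ℕ), A n = t}]
        (A k) := MeasurableSpace.measurableSet_generateFrom (by exact ⟨k, rfl, rfl⟩)
    have h2 : MeasurableSet[MeasurableSpace.generateFrom {t | ∃ m ∈ {m : ℕ | k < m}, A m = t}]
        (⋂ (m : ℕ) (_ : k < m), (A m)ᶜ) :=
      MeasurableSet.iInter fun m => MeasurableSet.iInter fun hm =>
        (MeasurableSpace.measurableSet_generateFrom (by exact ⟨m, hm, rfl⟩)).compl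
    have hmul := (ProbabilityTheory.Indep_iff _ _ P).mp hind (A k)
      (⋂ (m : ℕ) (_ : k < m), (A m)ᶜ) h1 h2
    rw [hG, hQ, ← hPA k]
    exact hmul
  -- structure of terminalRecordIndex
  have h1R : ∀ ω : Ω, 1 ∈ {m : ℕ | 1 ≤ m ∧ IsCompleteRecord X m ω} := by
    intro ω
    exact ⟨le_refl 1, fun i h1 h2 j => absurd h2 (by omega)⟩
  have hmemR : ∀ (ω : Ω) (k : ℕ),
      (k + 1 ∈ {m : ℕ | 1 ≤ m ∧ IsCompleteRecord X m ω}) ↔ ω ∈ A k := by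
    intro ω k
    constructor
    · intro h i hik j
      exact h.2 (i + 1) (by omega) (by omega) j
    · intro h
      refine ⟨by omega, fun i h1 h2 j => ?_⟩
      have := h (i - 1) (by omega) j
      rwa [Nat.sub_add_cancel h1] at this
  have hTG : ∀ (ω : Ω) (k : ℕ), terminalRecordIndex X ω = k + 1 ↔ ω ∈ G k := by
    intro ω k
    constructor
    · intro hT
      have hbdd : BddAbove {m : ℕ | 1 ≤ m ∧ IsCompleteRecord X m ω} := by
        by_contra hb
        rw [terminalRecordIndex, csSup_of_not_bddAbove hb, csSup_empty] at hT
        have h0 : (0 : ℕ) = k + 1 := hT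
        omega
      have hsup := Nat.sSup_mem ⟨1, h1R ω⟩ hbdd
      rw [show sSup {m : ℕ | 1 ≤ m ∧ IsCompleteRecord X m ω} = terminalRecordIndex X ω
        from rfl, hT] at hsup
      refine ⟨(hmemR ω k).mp hsup, ?_⟩
      refine Set.mem_iInter.mpr fun m => Set.mem_iInter.mpr fun hm => ?_
      intro hmem
      have hle : m + 1 ≤ terminalRecordIndex X ω := le_csSup hbdd ((hmemR ω m).mpr hmem)
      omega
    · rintro ⟨hAk, hB⟩
      simp only [Set.mem_iInter, Set.mem_compl_iff] at hB
      have hbdd : ∀ m ∈ {m : ℕ | 1 ≤ m ∧ IsCompleteRecord X m ω}, m ≤ k + 1 := by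
        intro m hm
        by_contra hgt
        push_neg at hgt
        have h1 : m - 1 + 1 = m := by
          have : 1 ≤ m := hm.1
          omega
        have : ω ∈ A (m - 1) := (hmemR ω (m - 1)).mp (by rw [h1]; exact hm)
        exact hB (m - 1) (by omega) this
      have hmem : k + 1 ∈ {m : ℕ | 1 ≤ m ∧ IsCompleteRecord X m ω} := (hmemR ω k).mpr hAk
      exact le_antisymm (csSup_le ⟨k + 1, hmem⟩ hbdd) (le_csSup ⟨k + 1, hbdd⟩ hmem)
  -- pointwise tsum identity and the integral
  have hTsum : ∀ ω : Ω, ((terminalRecordIndex X ω : ℕ) : ℝ≥0∞)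
      = ∑' k : ℕ, (G k).indicator (fun _ => ((k : ℝ≥0∞) + 1)) ω := by
    intro ω
    cases hT : terminalRecordIndex X ω with
    | zero =>
      have hz : ∀ k : ℕ, (G k).indicator (fun _ => ((k : ℝ≥0∞) + 1)) ω = 0 := by
        intro k
        rw [Set.indicator_of_notMem]
        intro hmem
        have := (hTG ω k).mpr hmem
        omega
      simp [hz]
    | succ k =>
      have hGk : ω ∈ G k := (hTG ω k).mp hT
      rw [tsum_eq_single k ?_]
      · rw [Set.indicator_of_mem hGk]
        push_cast
        ring
      · intro k' hk'
        rw [Set.indicator_of_notMem]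
        intro hmem
        have := (hTG ω k').mpr hmem
        omega
  have hInt : ∫⁻ ω, (terminalRecordIndex X ω : ℝ≥0∞) ∂P
      = ∑' k : ℕ, ((k : ℝ≥0∞) + 1) * (p k * Q k) := by
    rw [lintegral_congr hTsum, lintegral_tsum fun k =>
      (measurable_const.indicator (hGmeas k)).aemeasurable]
    refine tsum_congr fun k => ?_
    rw [lintegral_indicator_const (hGmeas k), hPG k]
  -- elementary bounds
  have hp_le_one : ∀ m : ℕ, p m ≤ 1 := by
    intro m
    rw [hp]
    refine ENNReal.inv_le_one.mpr ?_
    have h1 : (1 : ℝ≥0∞) ≤ (m : ℝ≥0∞) + 1 := le_add_self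
    exact h1.trans (le_self_pow₀ h1 (by omega))
  have hkp : ∀ k : ℕ, ((k : ℝ≥0∞) + 1) * p k = (((k : ℝ≥0∞) + 1) ^ (d - 1))⁻¹ := by
    intro k
    have hc0 : ((k : ℝ≥0∞) + 1) ≠ 0 := (zero_lt_one.trans_le le_add_self).ne'
    have hct : ((k : ℝ≥0∞) + 1) ≠ ⊤ := by simp
    have hpow : ((k : ℝ≥0∞) + 1) ^ d = ((k : ℝ≥0∞) + 1) * ((k : ℝ≥0∞) + 1) ^ (d - 1) := by
      conv_lhs => rw [show d = (d - 1) + 1 by omega]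
      rw [pow_succ]
      ring
    simp only [hp]
    rw [hpow, ENNReal.mul_inv (Or.inl hc0) (Or.inl hct), ← mul_assoc,
      ENNReal.mul_inv_cancel hc0 hct, one_mul]
  have hcast : ∀ k : ℕ, ((((k : ℝ≥0∞) + 1) ^ (d - 1))⁻¹).toReal
      = 1 / ((k + 1 : ℕ) : ℝ) ^ (d - 1) := by
    intro k
    rw [ENNReal.toReal_inv, ENNReal.toReal_pow, ENNReal.toReal_add (by simp) (by simp),
      ENNReal.toReal_natCast, ENNReal.toReal_one, one_div]
    push_cast
    ring
  have hsumR : Summable (fun k : ℕ => 1 / ((k + 1 : ℕ) : ℝ) ^ (d - 1)) := by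
    have h2 : 1 < d - 1 := by omega
    have h3 := Real.summable_one_div_nat_pow.mpr h2
    exact (summable_nat_add_iff 1).mpr h3
  have hterm_eq : ∀ k : ℕ, (((k : ℝ≥0∞) + 1) ^ (d - 1))⁻¹
      = ENNReal.ofReal (1 / ((k + 1 : ℕ) : ℝ) ^ (d - 1)) := by
    intro k
    rw [one_div, ENNReal.ofReal_inv_of_pos (by positivity), ENNReal.ofReal_pow (by positivity)]
    congr 2
    rw [show ((k + 1 : ℕ) : ℝ) = ((k : ℝ) + 1) by push_cast; ring, ENNReal.ofReal_add
      (by positivity) zero_le_one]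
    simp
  have hfin : ∑' k : ℕ, (((k : ℝ≥0∞) + 1) ^ (d - 1))⁻¹ ≠ ⊤ := by
    rw [tsum_congr hterm_eq, ← ENNReal.ofReal_tsum_of_nonneg (fun k => by positivity) hsumR]
    exact ENNReal.ofReal_ne_top
  have htermle : ∀ k : ℕ, ((k : ℝ≥0∞) + 1) * (p k * Q k)
      ≤ (((k : ℝ≥0∞) + 1) ^ (d - 1))⁻¹ := by
    intro k
    calc ((k : ℝ≥0∞) + 1) * (p k * Q k) ≤ ((k : ℝ≥0∞) + 1) * (p k * 1) := by
          exact mul_le_mul_right (mul_le_mul_right prob_le_one _) _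
      _ = (((k : ℝ≥0∞) + 1) ^ (d - 1))⁻¹ := by rw [mul_one, hkp k]
  have hterm_ne_top : ∀ k : ℕ, ((k : ℝ≥0∞) + 1) * (p k * Q k) ≠ ⊤ := by
    intro k
    refine ne_top_of_le_ne_top ?_ (htermle k)
    exact ENNReal.inv_ne_top.mpr (pow_ne_zero _ (zero_lt_one.trans_le le_add_self).ne')
  -- per-k real infinite product
  have hQtoReal : ∀ k : ℕ,
      (∏' m : ℕ, (1 - 1 / ((m + k + 2 : ℕ) : ℝ) ^ d)) = (Q k).toReal := by
    intro k
    have hg_nonneg : ∀ m : ℕ, 0 ≤ 1 - 1 / ((m + k + 2 : ℕ) : ℝ) ^ d := by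
      intro m
      have h1 : (1 : ℝ) ≤ ((m + k + 2 : ℕ) : ℝ) := by
        push_cast
        linarith [Nat.cast_nonneg (α := ℝ) m, Nat.cast_nonneg (α := ℝ) k]
      have h2 : (1 : ℝ) ≤ ((m + k + 2 : ℕ) : ℝ) ^ d := one_le_pow₀ h1
      have h3 : 1 / ((m + k + 2 : ℕ) : ℝ) ^ d ≤ 1 := by
        rw [div_le_one (by positivity)]
        exact h2
      linarith
    have hg_le_one : ∀ m : ℕ, 1 - 1 / ((m + k + 2 : ℕ) : ℝ) ^ d ≤ 1 := by
      intro m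
      have : 0 ≤ 1 / ((m + k + 2 : ℕ) : ℝ) ^ d := by positivity
      linarith
    have hpart : ∀ r : ℕ, P (⋂ m ∈ Finset.Ioc k (k + r), (A m)ᶜ)
        = ∏ m ∈ Finset.Ioc k (k + r), (1 - p m) := by
      intro r
      have hiidσ := (iIndepSet_iff_iIndep A P).mp hiid
      rw [hiidσ.meas_biInter (S := Finset.Ioc k (k + r)) (s := fun m => (A m)ᶜ)
        (fun m _ => (MeasurableSpace.measurableSet_generateFrom
          (show A m ∈ ({A m} : Set (Set Ω)) from rfl)).compl)]
      exact Finset.prod_congr rfl fun m _ => by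
        rw [prob_compl_eq_one_sub (hAmeas m), hPA m]
    have hanti : Antitone (fun r : ℕ => ⋂ m ∈ Finset.Ioc k (k + r), (A m)ᶜ) := by
      intro r r' hrr' ω hω
      refine Set.mem_iInter₂.mpr fun m hm => Set.mem_iInter₂.mp hω m ?_
      rw [Finset.mem_Ioc] at hm ⊢
      omega
    have hiInter : (⋂ r : ℕ, ⋂ m ∈ Finset.Ioc k (k + r), (A m)ᶜ)
        = ⋂ (m : ℕ) (_ : k < m), (A m)ᶜ := by
      ext ω
      simp only [Set.mem_iInter, Finset.mem_Ioc]
      constructor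
      · intro h m hm
        exact h (m - k) m ⟨hm, by omega⟩
      · intro h r m hm
        exact h m hm.1
    have hQlim : Tendsto (fun r : ℕ => P (⋂ m ∈ Finset.Ioc k (k + r), (A m)ᶜ)) atTop
        (𝓝 (Q k)) := by
      have hmeas' : ∀ r : ℕ, NullMeasurableSet (⋂ m ∈ Finset.Ioc k (k + r), (A m)ᶜ) P :=
        fun r => (MeasurableSet.iInter fun m => MeasurableSet.iInter fun _ =>
          (hAmeas m).compl).nullMeasurableSet
      have h0 := tendsto_measure_iInter_atTop hmeas' hanti ⟨0, measure_ne_top P _⟩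
      rw [hiInter] at h0
      exact h0
    have hIoc_image : ∀ r : ℕ,
        Finset.Ioc k (k + r) = (Finset.range r).image (fun i => k + 1 + i) := by
      intro r
      ext m
      simp only [Finset.mem_Ioc, Finset.mem_image, Finset.mem_range]
      constructor
      · rintro ⟨h1, h2⟩
        exact ⟨m - k - 1, by omega, by omega⟩
      · rintro ⟨i, hi, rfl⟩
        omega
    have htermR : ∀ i : ℕ, (1 - p (k + 1 + i)).toReal
        = 1 - 1 / ((i + k + 2 : ℕ) : ℝ) ^ d := by
      intro i
      rw [ENNReal.toReal_sub_of_le (hp_le_one _) (by simp), ENNReal.toReal_one]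
      congr 1
      simp only [hp]
      rw [ENNReal.toReal_inv, ENNReal.toReal_pow, ENNReal.toReal_add (by simp) (by simp),
        ENNReal.toReal_natCast, ENNReal.toReal_one, one_div]
      push_cast
      ring_nf
    have hpartR : ∀ r : ℕ, (P (⋂ m ∈ Finset.Ioc k (k + r), (A m)ᶜ)).toReal
        = ∏ i ∈ Finset.range r, (1 - 1 / ((i + k + 2 : ℕ) : ℝ) ^ d) := by
      intro r
      rw [hpart r, ENNReal.toReal_prod, hIoc_image r,
        Finset.prod_image (fun i _ j _ h => by omega)]
      exact Finset.prod_congr rfl fun i _ => htermR i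
    set F : Finset ℕ → ℝ := fun s => ∏ i ∈ s, (1 - 1 / ((i + k + 2 : ℕ) : ℝ) ^ d) with hFdef
    have hFanti : Antitone F := by
      intro s t hst
      have hsd := Finset.prod_sdiff hst (f := fun i => 1 - 1 / ((i + k + 2 : ℕ) : ℝ) ^ d)
      show F t ≤ F s
      rw [hFdef]
      simp only
      rw [← hsd]
      refine mul_le_of_le_one_left (Finset.prod_nonneg fun i _ => hg_nonneg i) ?_
      exact Finset.prod_le_one (fun i _ => hg_nonneg i) (fun i _ => hg_le_one i)
    have hFbdd : BddBelow (Set.range F) := by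
      refine ⟨0, ?_⟩
      rintro x ⟨s, rfl⟩
      exact Finset.prod_nonneg fun i _ => hg_nonneg i
    have hFlim : Tendsto F atTop (𝓝 (⨅ s, F s)) := tendsto_atTop_ciInf hFanti hFbdd
    have hlim1 : Tendsto (fun r : ℕ => F (Finset.range r)) atTop (𝓝 (⨅ s, F s)) :=
      hFlim.comp tendsto_finset_range
    have hlim2 : Tendsto (fun r : ℕ => F (Finset.range r)) atTop (𝓝 ((Q k).toReal)) := by
      have h0 := (ENNReal.tendsto_toReal (measure_ne_top P _)).comp hQlim
      have heq : (fun r : ℕ => F (Finset.range r))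
          = fun r : ℕ => (P (⋂ m ∈ Finset.Ioc k (k + r), (A m)ᶜ)).toReal := by
        funext r
        exact (hpartR r).symm
      rw [heq]
      exact h0
    have hiQ : (⨅ s, F s) = (Q k).toReal := tendsto_nhds_unique hlim1 hlim2
    have hHP : HasProd (fun i : ℕ => 1 - 1 / ((i + k + 2 : ℕ) : ℝ) ^ d) (⨅ s, F s) := hFlim
    rw [hHP.tprod_eq, hiQ]
  refine ⟨?_, ?_, ?_⟩
  · rw [hInt]
    exact ne_top_of_le_ne_top hfin (ENNReal.tsum_le_tsum htermle)
  · rw [hInt, ENNReal.tsum_toReal_eq hterm_ne_top]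
    refine tsum_congr fun k => ?_
    rw [← mul_assoc, hkp k, ENNReal.toReal_mul, hcast k, hQtoReal k]
  · rw [hInt, ENNReal.tsum_toReal_eq hterm_ne_top]
    have hle : ∀ k : ℕ, (((k : ℝ≥0∞) + 1) * (p k * Q k)).toReal
        ≤ 1 / ((k + 1 : ℕ) : ℝ) ^ (d - 1) := by
      intro k
      calc (((k : ℝ≥0∞) + 1) * (p k * Q k)).toReal
          ≤ ((((k : ℝ≥0∞) + 1) ^ (d - 1))⁻¹).toReal :=
            ENNReal.toReal_mono (ENNReal.inv_ne_top.mpr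
              (pow_ne_zero _ (zero_lt_one.trans_le le_add_self).ne')) (htermle k)
        _ = 1 / ((k + 1 : ℕ) : ℝ) ^ (d - 1) := hcast k
    refine Summable.tsum_le_tsum hle ?_ hsumR
    exact Summable.of_nonneg_of_le (fun k => ENNReal.toReal_nonneg) hle hsumR
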